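/- Let n ≥ 1, let (a_0,…,a_k) be nonnegative integers, and fix an index i with 1 ≤ i ≤ k and a_i ≥ 1 (when i = k, interpret references to a_{k+1} by extending the tuple with a_{k+1} = 0). Then Q_n(a_0,…,a_k) = 2·Q_{n-1}(a_0,…,a_k) + Q_{n-1}(…, a_{i-1} + 1, a_i − 1, …) + Q_{n-1}(…, a_i − 1, a_{i+1} + 1, …) − Q_{n-1}(…, a_{i-1} + 1, a_i, …) − Q_{n-1}(…, a_i + 1, …) − Q_{n-1}(…, a_i, a_{i+1} + 1, …), where in each term only the indicated entries of the tuple are changed. -/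

import Mathlib

/-- A Dyck path: a finite sequence of ±1 steps with all partial sums nonnegative
and total sum zero. -/
def IsDyckPath (p : List ℤ) : Prop :=
  (∀ s ∈ p, s = 1 ∨ s = -1) ∧ (∀ k, 0 ≤ (p.take k).sum) ∧ p.sum = 0

/-- The height of a path: the maximum of its partial sums (0 for the empty path). -/
def pathHeight (p : List ℤ) : ℕ :=
  Finset.sup (Finset.range (p.length + 1)) (fun k => ((p.take k).sum).toNat)

/-- Super-Catalan numbers `T(m,n) = (2m)!(2n)!/(2·m!·n!·(m+n)!)`, as a rational number. -/
def superCatalan (m n : ℕ) : ℚ :=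
  ((2 * m).factorial * (2 * n).factorial : ℚ) /
    (2 * m.factorial * n.factorial * (m + n).factorial)

/-- `G n m k`: the number of `m`-tuples of Dyck paths of total length `2n` all of whose
pairwise height differences are at most `k` (this is `0` when `n < 0`). -/
noncomputable def G (n : ℤ) (m k : ℕ) : ℕ :=
  Nat.card {p : Fin m → List ℤ //
    (∀ i, IsDyckPath (p i)) ∧
    (∑ i, ((p i).length : ℤ)) = 2 * n ∧
    ∀ i j, |(pathHeight (p i) : ℤ) - (pathHeight (p j) : ℤ)| ≤ (k : ℤ)}

/-- The path-height function `P n [a₁,…,aₘ]`: the number of `m`-tuples of Dyck paths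
of total length `2n` whose `i`-th path has height `aᵢ`. -/
noncomputable def P (n : ℤ) (a : List ℕ) : ℕ :=
  Nat.card {p : Fin a.length → List ℤ //
    (∀ i, IsDyckPath (p i)) ∧
    (∑ i, ((p i).length : ℤ)) = 2 * n ∧
    ∀ i, pathHeight (p i) = a.get i}

/-- `Qx n x [a₀,…,a_k]` is `P n` evaluated at `a₀` copies of `x`, `a₁` copies of `x+1`, …,
`a_k` copies of `x+k`. -/
noncomputable def Qx (n : ℤ) (x : ℕ) (a : List ℕ) : ℕ :=
  P n (a.zipIdx.flatMap fun q => List.replicate q.1 (x + q.2))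

/-- The grouped path-height function `Q n a = ∑_{x=0}^∞ Qx n x a`. Whenever some entry
of `a` is positive (as in every application below) all terms with `x > n` vanish, since
a Dyck path of height at least `x` has length at least `2x`; so the infinite sum equals
its truncation at `x = n`. -/
noncomputable def Q (n : ℤ) (a : List ℕ) : ℕ :=
  ∑ x ∈ Finset.range (n.toNat + 1), Qx n x a

namespace DyckAux

/-! ### Sums of prefixes -/

lemma sum_le_length (l : List ℤ) (h : ∀ s ∈ l, s = 1 ∨ s = -1) : l.sum ≤ l.length := by
  induction l with
  | nil => simp
  | cons a t ih =>
    have ha := h a (by simp)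
    have ht := ih (fun s hs => h s (by simp [hs]))
    simp only [List.sum_cons, List.length_cons]
    push_cast
    rcases ha with h1 | h1 <;> omega

lemma neg_length_le_sum (l : List ℤ) (h : ∀ s ∈ l, s = 1 ∨ s = -1) :
    -(l.length : ℤ) ≤ l.sum := by
  induction l with
  | nil => simp
  | cons a t ih =>
    have ha := h a (by simp)
    have ht := ih (fun s hs => h s (by simp [hs]))
    simp only [List.sum_cons, List.length_cons]
    push_cast
    rcases ha with h1 | h1 <;> omega

lemma sum_take_append (A B : List ℤ) (k : ℕ) :
    ((A ++ B).take k).sum = (A.take k).sum + (B.take (k - A.length)).sum := by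
  rw [List.take_append, List.sum_append]

lemma sum_take_cons_succ (a : ℤ) (l : List ℤ) (k : ℕ) :
    ((a :: l).take (k + 1)).sum = a + (l.take k).sum := by
  simp [List.take_succ_cons]

lemma sum_take_of_le {l : List ℤ} {k : ℕ} (h : l.length ≤ k) : (l.take k).sum = l.sum := by
  rw [List.take_of_length_le h]

lemma sum_take_drop (l : List ℤ) (m j : ℕ) :
    ((l.drop m).take j).sum = (l.take (m + j)).sum - (l.take m).sum := by
  rw [List.take_add, List.sum_append]; ring

lemma sum_take_entries_le (p : List ℤ) (h : ∀ s ∈ p, s = 1 ∨ s = -1) (k : ℕ) :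
    (p.take k).sum ≤ k := by
  calc (p.take k).sum ≤ ((p.take k).length : ℤ) :=
        sum_le_length _ (fun s hs => h s (List.mem_of_mem_take hs))
    _ ≤ k := by simp [List.length_take]

/-! ### Height -/

lemma height_le_iff {p : List ℤ} {m : ℕ} :
    pathHeight p ≤ m ↔ ∀ k, (p.take k).sum ≤ (m : ℤ) := by
  unfold pathHeight
  rw [Finset.sup_le_iff]
  constructor
  · intro H k
    rcases le_or_gt k p.length with hk | hk
    · exact Int.toNat_le.mp (H k (Finset.mem_range.mpr (by omega)))
    · rw [sum_take_of_le hk.le, ← sum_take_of_le (le_refl p.length)]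
      exact Int.toNat_le.mp (H p.length (Finset.mem_range.mpr (by omega)))
  · intro H k _
    exact Int.toNat_le.mpr (H k)

lemma take_sum_le_height (p : List ℤ) (k : ℕ) : (p.take k).sum ≤ (pathHeight p : ℤ) :=
  height_le_iff.mp (le_refl _) k

lemma exists_take_height (p : List ℤ) :
    ∃ k ≤ p.length, ((p.take k).sum).toNat = pathHeight p := by
  obtain ⟨b, hb, heq⟩ := Finset.exists_mem_eq_sup (Finset.range (p.length + 1))
    ⟨0, Finset.mem_range.mpr (by omega)⟩ (fun k => ((p.take k).sum).toNat)
  exact ⟨b, by have := Finset.mem_range.mp hb; omega, heq.symm⟩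

lemma head_one {a : ℤ} {t : List ℤ} (hp : IsDyckPath (a :: t)) : a = 1 := by
  have h1 := hp.2.1 1
  simp only [List.take_succ_cons, List.take_zero, List.sum_cons, List.sum_nil, add_zero] at h1
  rcases hp.1 a (by simp) with h | h
  · exact h
  · omega

lemma dyck_nil : IsDyckPath [] := ⟨by simp, by simp, by simp⟩

lemma height_nil : pathHeight ([] : List ℤ) = 0 := by
  simp [pathHeight]

lemma two_mul_height_le {p : List ℤ} (hp : IsDyckPath p) : 2 * pathHeight p ≤ p.length := by
  obtain ⟨k, hk, heq⟩ := exists_take_height p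
  have h1 : (p.take k).sum ≤ k := sum_take_entries_le p hp.1 k
  have hsplit : (p.take k).sum + (p.drop k).sum = 0 := by
    rw [← List.sum_append, List.take_append_drop]; exact hp.2.2
  have h2 : -((p.drop k).length : ℤ) ≤ (p.drop k).sum :=
    neg_length_le_sum _ (fun s hs => hp.1 s ((List.drop_sublist k p).subset hs))
  have h3 : (p.drop k).length = p.length - k := List.length_drop
  have h4 : ((pathHeight p : ℤ)) = (p.take k).sum := by
    rw [← heq, Int.toNat_of_nonneg (hp.2.1 k)]
  omega

/-! ### Composition `1 :: q ++ -1 :: r` -/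

lemma sum_take_comp₁ (q r : List ℤ) (j : ℕ) (hj : j ≤ q.length) :
    ((1 :: q ++ -1 :: r).take (j + 1)).sum = 1 + (q.take j).sum := by
  rw [sum_take_append, sum_take_cons_succ]
  have : j + 1 - (1 :: q).length = 0 := by simp; omega
  rw [this]
  simp

lemma sum_take_comp₂ (q r : List ℤ) (hqs : q.sum = 0) (m : ℕ) :
    ((1 :: q ++ -1 :: r).take (q.length + 2 + m)).sum = (r.take m).sum := by
  rw [sum_take_append]
  have h1 : (1 :: q).length ≤ q.length + 2 + m := by simp; omega
  rw [sum_take_of_le h1]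
  have h2 : q.length + 2 + m - (1 :: q).length = m + 1 := by simp; omega
  rw [h2, sum_take_cons_succ]
  simp [hqs]

lemma dyck_comp {q r : List ℤ} (hq : IsDyckPath q) (hr : IsDyckPath r) :
    IsDyckPath (1 :: q ++ -1 :: r) := by
  refine ⟨?_, ?_, ?_⟩
  · intro s hs
    simp only [List.mem_append, List.mem_cons] at hs
    rcases hs with (h | h) | (h | h)
    · left; exact h
    · exact hq.1 s h
    · right; exact h
    · exact hr.1 s h
  · intro k
    rcases k with _ | j
    · simp
    · rcases le_or_gt j q.length with h | h
      · rw [sum_take_comp₁ q r j h]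
        have := hq.2.1 j
        omega
      · have hm : j + 1 = q.length + 2 + (j - 1 - q.length) := by omega
        rw [hm, sum_take_comp₂ q r hq.2.2]
        exact hr.2.1 _
  · simp [List.sum_append, hq.2.2, hr.2.2]

lemma height_comp {q r : List ℤ} (hq : IsDyckPath q) (hr : IsDyckPath r) :
    pathHeight (1 :: q ++ -1 :: r) = max (pathHeight q + 1) (pathHeight r) := by
  have hM1 : pathHeight q + 1 ≤ max (pathHeight q + 1) (pathHeight r) := le_max_left _ _
  have hM2 : pathHeight r ≤ max (pathHeight q + 1) (pathHeight r) := le_max_right _ _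
  apply le_antisymm
  · rw [height_le_iff]
    intro k
    rcases k with _ | j
    · simp
    · rcases le_or_gt j q.length with h | h
      · rw [sum_take_comp₁ q r j h]
        have := take_sum_le_height q j
        omega
      · have hm : j + 1 = q.length + 2 + (j - 1 - q.length) := by omega
        rw [hm, sum_take_comp₂ q r hq.2.2]
        have := take_sum_le_height r (j - 1 - q.length)
        omega
  · refine max_le ?_ ?_
    · obtain ⟨k, hk, heq⟩ := exists_take_height q
      have h1 : ((1 :: q ++ -1 :: r).take (k + 1)).sum = 1 + (q.take k).sum :=
        sum_take_comp₁ q r k hk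
      have h2 := take_sum_le_height (1 :: q ++ -1 :: r) (k + 1)
      have h3 : ((pathHeight q : ℤ)) = (q.take k).sum := by
        rw [← heq, Int.toNat_of_nonneg (hq.2.1 k)]
      omega
    · obtain ⟨k, hk, heq⟩ := exists_take_height r
      have h1 := sum_take_comp₂ q r hq.2.2 k
      have h2 := take_sum_le_height (1 :: q ++ -1 :: r) (q.length + 2 + k)
      have h3 : ((pathHeight r : ℤ)) = (r.take k).sum := by
        rw [← heq, Int.toNat_of_nonneg (hr.2.1 k)]
      omega

/-! ### First-return decomposition -/

lemma exists_decomp {p : List ℤ} (hp : IsDyckPath p) (hne : p ≠ []) :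
    ∃ q r, IsDyckPath q ∧ IsDyckPath r ∧ p = 1 :: q ++ -1 :: r := by
  obtain ⟨a, t, rfl⟩ : ∃ a t, p = a :: t := by
    cases p with
    | nil => exact absurd rfl hne
    | cons a t => exact ⟨a, t, rfl⟩
  have ha : a = 1 := head_one hp
  subst ha
  have htsum : t.sum = -1 := by
    have := hp.2.2; simp only [List.sum_cons] at this; omega
  have hex : ∃ j, (t.take j).sum = -1 ∧ j ≤ t.length :=
    ⟨t.length, by rw [sum_take_of_le (le_refl _)]; exact htsum, le_refl _⟩
  classical
  obtain ⟨hjs, hjle⟩ := Nat.find_spec hex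
  have hmin : ∀ m < Nat.find hex, 0 ≤ (t.take m).sum := by
    intro m hm
    have h1 := hp.2.1 (m + 1)
    rw [sum_take_cons_succ] at h1
    have h2 := Nat.find_min hex hm
    have h3 : m ≤ t.length := by omega
    simp only [h3, and_true] at h2
    omega
  have hj0 : Nat.find hex ≠ 0 := by
    intro h
    rw [h] at hjs; simp at hjs
  obtain ⟨i, hieq⟩ : ∃ i, Nat.find hex = i + 1 := ⟨Nat.find hex - 1, by omega⟩
  rw [hieq] at hjs hjle hmin
  have hi_lt : i < t.length := by omega
  have hstep : (t.take (i + 1)).sum = (t.take i).sum + t.get ⟨i, hi_lt⟩ :=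
    List.sum_take_succ t i hi_lt
  have hmem : t.get ⟨i, hi_lt⟩ = 1 ∨ t.get ⟨i, hi_lt⟩ = -1 :=
    hp.1 _ (by exact List.mem_cons_of_mem 1 (t.get_mem ⟨i, hi_lt⟩))
  have hi0 : 0 ≤ (t.take i).sum := hmin i (by omega)
  have hti : t.get ⟨i, hi_lt⟩ = -1 := by
    rcases hmem with h | h
    · omega
    · exact h
  have hSi : (t.take i).sum = 0 := by omega
  have hteq : t = t.take i ++ -1 :: t.drop (i + 1) := by
    have hti' : t[i] = -1 := hti
    conv_lhs => rw [← List.take_append_drop i t]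
    rw [List.drop_eq_getElem_cons hi_lt, hti']
  refine ⟨t.take i, t.drop (i + 1), ⟨?_, ?_, ?_⟩, ⟨?_, ?_, ?_⟩, ?_⟩
  · intro s hs
    exact hp.1 s (List.mem_cons_of_mem 1 (List.mem_of_mem_take hs))
  · intro m
    rw [List.take_take]
    exact hmin (min m i) (by have := Nat.min_le_right m i; omega)
  · exact hSi
  · intro s hs
    exact hp.1 s (List.mem_cons_of_mem 1 ((List.drop_sublist (i+1) t).subset hs))
  · intro m
    rw [sum_take_drop]
    have h1 := hp.2.1 (i + 1 + m + 1)
    rw [sum_take_cons_succ] at h1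
    omega
  · have := congrArg List.sum (List.take_append_drop (i + 1) t)
    rw [List.sum_append] at this
    omega
  · rw [List.cons_append]
    exact congrArg (List.cons 1) hteq

lemma decomp_ne {q r q' r' : List ℤ} (hq : IsDyckPath q) (hq' : IsDyckPath q')
    (hlt : q.length < q'.length) :
    1 :: q ++ -1 :: r ≠ 1 :: q' ++ -1 :: r' := by
  intro h
  have heq := congrArg (fun l : List ℤ => ((l.take (q.length + 2)).sum)) h
  have h1 : ((1 :: q ++ -1 :: r).take (q.length + 2)).sum = (r.take 0).sum := by
    have : q.length + 2 = q.length + 2 + 0 := by omega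
    rw [this, sum_take_comp₂ q r hq.2.2]
  have h2 : ((1 :: q' ++ -1 :: r').take (q.length + 2)).sum = 1 + (q'.take (q.length + 1)).sum := by
    have : q.length + 2 = (q.length + 1) + 1 := by omega
    rw [this, sum_take_comp₁ q' r' (q.length + 1) (by omega)]
  rw [h1, h2] at heq
  have := hq'.2.1 (q.length + 1)
  simp at heq
  omega

lemma decomp_unique {q r q' r' : List ℤ} (hq : IsDyckPath q) (hq' : IsDyckPath q')
    (h : 1 :: q ++ -1 :: r = 1 :: q' ++ -1 :: r') : q = q' ∧ r = r' := by
  have hlen : q.length = q'.length := by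
    rcases lt_trichotomy q.length q'.length with hl | hl | hl
    · exact absurd h (decomp_ne hq hq' hl)
    · exact hl
    · exact absurd h.symm (decomp_ne hq' hq hl)
  have := List.append_inj h (by simp [hlen])
  obtain ⟨h1, h2⟩ := this
  exact ⟨by injection h1, by injection h2⟩



/-! ### Finiteness -/

lemma finite_master (m : ℕ) :
    Finite {p : List ℤ // p.length ≤ m ∧ ∀ s ∈ p, s = 1 ∨ s = -1} := by
  apply Finite.of_injective
    (f := fun x : {p : List ℤ // p.length ≤ m ∧ ∀ s ∈ p, s = 1 ∨ s = -1} =>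
      ((fun i : Fin m => if h : (i : ℕ) < x.1.length then (x.1.get ⟨i, h⟩ == 1) else true,
        (⟨x.1.length, by omega⟩ : Fin (m + 1))) : (Fin m → Bool) × Fin (m + 1)))
  intro x y hxy
  have hlen : x.1.length = y.1.length := by
    have := congrArg Prod.snd hxy
    simpa using congrArg Fin.val this
  apply Subtype.ext
  apply List.ext_getElem hlen
  intro i h1 h2
  have hfun := congrFun (congrArg Prod.fst hxy) ⟨i, by omega⟩
  simp only [dif_pos h1, dif_pos h2] at hfun
  have hx := x.2.2 _ (x.1.get_mem ⟨i, h1⟩)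
  have hy := y.2.2 _ (y.1.get_mem ⟨i, h2⟩)
  have hgx : x.1[i] = x.1.get ⟨i, h1⟩ := rfl
  have hgy : y.1[i] = y.1.get ⟨i, h2⟩ := rfl
  rcases hx with hx | hx <;> rcases hy with hy | hy
  · rw [hgx, hgy, hx, hy]
  · rw [hx, hy] at hfun
    exact absurd hfun (by decide)
  · rw [hx, hy] at hfun
    exact absurd hfun (by decide)
  · rw [hgx, hgy, hx, hy]

lemma finite_subtype_paths {m : ℕ} {Q : List ℤ → Prop}
    (hQ : ∀ p, Q p → p.length ≤ m ∧ ∀ s ∈ p, s = 1 ∨ s = -1) :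
    Finite {p : List ℤ // Q p} := by
  have := finite_master m
  apply Finite.of_injective
    (f := fun x : {p : List ℤ // Q p} =>
      (⟨x.1, hQ x.1 x.2⟩ : {p : List ℤ // p.length ≤ m ∧ ∀ s ∈ p, s = 1 ∨ s = -1}))
  intro x y h
  apply Subtype.ext
  exact congrArg (Subtype.val (p := fun p : List ℤ => p.length ≤ m ∧ ∀ s ∈ p, s = 1 ∨ s = -1)) h

/-! ### The counted sets -/

def Dset (h n : ℕ) : Type :=
  {p : List ℤ // IsDyckPath p ∧ p.length = 2 * n ∧ pathHeight p ≤ h}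

def Eset (h n : ℕ) : Type :=
  {p : List ℤ // IsDyckPath p ∧ p.length = 2 * n ∧ pathHeight p = h}

def Tset (L : List ℕ) (n : ℕ) : Type :=
  {p : Fin L.length → List ℤ //
    (∀ i, IsDyckPath (p i)) ∧
    (∑ i, ((p i).length : ℤ)) = 2 * (n : ℤ) ∧
    ∀ i, pathHeight (p i) = L.get i}

instance (h n : ℕ) : Finite (Dset h n) :=
  finite_subtype_paths (m := 2 * n) (fun p hp => ⟨le_of_eq hp.2.1, hp.1.1⟩)

instance (h n : ℕ) : Finite (Eset h n) :=
  finite_subtype_paths (m := 2 * n) (fun p hp => ⟨le_of_eq hp.2.1, hp.1.1⟩)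

lemma Tset_len_le {L : List ℕ} {n : ℕ} (x : Tset L n) (i : Fin L.length) :
    (x.1 i).length ≤ 2 * n := by
  have h1 : ((x.1 i).length : ℤ) ≤ ∑ j, ((x.1 j).length : ℤ) :=
    Finset.single_le_sum (f := fun j => ((x.1 j).length : ℤ))
      (fun j _ => by positivity) (Finset.mem_univ i)
  rw [x.2.2.1] at h1
  exact_mod_cast h1

instance (L : List ℕ) (n : ℕ) : Finite (Tset L n) := by
  have hM := finite_master (2 * n)
  apply Finite.of_injective
    (f := fun x : Tset L n =>
      (fun i => ⟨x.1 i, Tset_len_le x i, (x.2.1 i).1⟩ :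
        Fin L.length → {p : List ℤ // p.length ≤ 2 * n ∧ ∀ s ∈ p, s = 1 ∨ s = -1}))
  intro x y hxy
  exact Subtype.ext (funext fun i => congrArg Subtype.val (congrFun hxy i))

noncomputable def Dc (h n : ℕ) : ℕ := Nat.card (Dset h n)
noncomputable def Ec (h n : ℕ) : ℕ := Nat.card (Eset h n)

lemma ncard_sigma {m : ℕ} (f : Fin m → Type*) [inst : ∀ i, Finite (f i)] :
    Nat.card (Σ i, f i) = ∑ i, Nat.card (f i) := by
  letI : ∀ i, Fintype (f i) := fun i => Fintype.ofFinite (f i)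
  simp [Nat.card_eq_fintype_card, Fintype.card_sigma]

/-! ### Basic counts -/

lemma dyck_even {p : List ℤ} (hp : IsDyckPath p) : ∃ j, p.length = 2 * j := by
  have key : ∀ l : List ℤ, (∀ s ∈ l, s = 1 ∨ s = -1) → (l.length : ℤ) % 2 = l.sum % 2 := by
    intro l hl
    induction l with
    | nil => simp
    | cons a t ih =>
      have ha := hl a (by simp)
      have ht := ih (fun s hs => hl s (by simp [hs]))
      simp only [List.sum_cons, List.length_cons]
      push_cast
      rcases ha with h | h <;> omega
  have := key p hp.1
  rw [hp.2.2] at this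
  have : p.length % 2 = 0 := by omega
  exact ⟨p.length / 2, by omega⟩

lemma height_pos {p : List ℤ} (hp : IsDyckPath p) (hne : p ≠ []) : 1 ≤ pathHeight p := by
  obtain ⟨a, t, rfl⟩ : ∃ a t, p = a :: t := by
    cases p with
    | nil => exact absurd rfl hne
    | cons a t => exact ⟨a, t, rfl⟩
  have ha : a = 1 := head_one hp
  subst ha
  have h1 := take_sum_le_height (1 :: t) 1
  simp only [List.take_succ_cons, List.take_zero, List.sum_cons, List.sum_nil, add_zero] at h1
  omega

lemma Dc_zero_n (h : ℕ) : Dc h 0 = 1 := by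
  rw [Dc, Nat.card_eq_one_iff_unique]
  constructor
  · constructor
    intro x y
    apply Subtype.ext
    have hx : x.1 = [] := List.length_eq_zero_iff.mp (by have := x.2.2.1; omega)
    have hy : y.1 = [] := List.length_eq_zero_iff.mp (by have := y.2.2.1; omega)
    rw [hx, hy]
  · exact ⟨⟨[], dyck_nil, by simp, by simp [height_nil]⟩⟩

lemma Dc_zero_h (n : ℕ) : Dc 0 (n + 1) = 0 := by
  rw [Dc, Nat.card_eq_zero]
  left
  constructor
  intro x
  have hne : x.1 ≠ [] := by
    intro h
    have := x.2.2.1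
    rw [h] at this
    simp only [List.length_nil] at this
    omega
  have := height_pos x.2.1 hne
  have := x.2.2.2
  omega

lemma Dc_rec (h n : ℕ) :
    Dc (h + 1) (n + 1) = ∑ j ∈ Finset.range (n + 1), Dc h j * Dc (h + 1) (n - j) := by
  have hΨ : Function.Bijective
      (fun x : Σ j : Fin (n + 1), Dset h j × Dset (h + 1) (n - j) =>
        (⟨1 :: x.2.1.1 ++ -1 :: x.2.2.1, dyck_comp x.2.1.2.1 x.2.2.2.1, by
            have h1 := x.2.1.2.2.1
            have h2 := x.2.2.2.2.1
            have h3 : (x.1 : ℕ) ≤ n := by omega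
            simp [List.length_append]
            omega, by
            rw [height_comp x.2.1.2.1 x.2.2.2.1]
            have h1 := x.2.1.2.2.2
            have h2 := x.2.2.2.2.2
            exact max_le (by omega) (by omega)⟩ : Dset (h + 1) (n + 1))) := by
    constructor
    · rintro ⟨⟨j, hj⟩, ⟨q, hqp, hqlen, hqht⟩, ⟨r, hrp, hrlen, hrht⟩⟩
        ⟨⟨j', hj'⟩, ⟨q', hqp', hqlen', hqht'⟩, ⟨r', hrp', hrlen', hrht'⟩⟩ hxy
      have hv : 1 :: q ++ -1 :: r = 1 :: q' ++ -1 :: r' := congrArg Subtype.val hxy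
      obtain ⟨hqq, hrr⟩ := decomp_unique hqp hqp' hv
      subst hqq
      subst hrr
      simp only [Fin.val_mk] at hqlen hqlen'
      have hjj : j = j' := by omega
      subst hjj
      rfl
    · rintro ⟨p, hp, hlen, hht⟩
      have hne : p ≠ [] := by
        intro hnil
        rw [hnil] at hlen
        simp only [List.length_nil] at hlen
        omega
      obtain ⟨q, r, hq, hr, rfl⟩ := exists_decomp hp hne
      obtain ⟨jq, hjq⟩ := dyck_even hq
      obtain ⟨jr, hjr⟩ := dyck_even hr
      have hlen' : q.length + r.length + 2 = 2 * (n + 1) := by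
        simp [List.length_append] at hlen
        omega
      have hjqn : jq ≤ n := by omega
      rw [height_comp hq hr] at hht
      have hmax := max_le_iff.mp hht
      have hrlen2 : r.length = 2 * (n - jq) := by omega
      exact ⟨⟨⟨jq, by omega⟩, ⟨q, hq, hjq, by omega⟩, ⟨r, hr, hrlen2, by omega⟩⟩, rfl⟩
  calc Dc (h + 1) (n + 1)
      = Nat.card (Σ j : Fin (n + 1), Dset h j × Dset (h + 1) (n - j)) :=
        (Nat.card_congr (Equiv.ofBijective _ hΨ)).symm
    _ = ∑ j : Fin (n + 1), Nat.card (Dset h j × Dset (h + 1) (n - j)) := ncard_sigma _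
    _ = ∑ j : Fin (n + 1), Dc h j * Dc (h + 1) (n - j) := by
        refine Finset.sum_congr rfl (fun j _ => ?_)
        rw [Nat.card_prod]
        rfl
    _ = ∑ j ∈ Finset.range (n + 1), Dc h j * Dc (h + 1) (n - j) :=
        Fin.sum_univ_eq_sum_range (fun j => Dc h j * Dc (h + 1) (n - j)) (n + 1)

lemma Dc_split (h n : ℕ) : Dc (h + 1) n = Dc h n + Ec (h + 1) n := by
  have hΦ : Function.Bijective
      (fun x : Dset h n ⊕ Eset (h + 1) n =>
        (Sum.elim
          (fun y : Dset h n => (⟨y.1, y.2.1, y.2.2.1, by have := y.2.2.2; omega⟩ : Dset (h + 1) n))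
          (fun y : Eset (h + 1) n => (⟨y.1, y.2.1, y.2.2.1, by have := y.2.2.2; omega⟩ :
            Dset (h + 1) n)) x)) := by
    constructor
    · rintro (x | x) (y | y) hxy <;>
        have hv := congrArg Subtype.val hxy
      · exact congrArg Sum.inl (Subtype.ext hv)
      · exfalso
        have hv' : (x.1 : List ℤ) = y.1 := hv
        have h1 := x.2.2.2
        have h2 := y.2.2.2
        rw [hv'] at h1
        omega
      · exfalso
        have hv' : (x.1 : List ℤ) = y.1 := hv
        have h1 := x.2.2.2
        have h2 := y.2.2.2
        rw [hv'] at h1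
        omega
      · exact congrArg Sum.inr (Subtype.ext hv)
    · rintro ⟨p, hp, hlen, hht⟩
      rcases Nat.lt_or_ge (pathHeight p) (h + 1) with hlt | hge
      · exact ⟨Sum.inl ⟨p, hp, hlen, by omega⟩, rfl⟩
      · exact ⟨Sum.inr ⟨p, hp, hlen, by omega⟩, rfl⟩
  calc Dc (h + 1) n = Nat.card (Dset h n ⊕ Eset (h + 1) n) :=
        (Nat.card_congr (Equiv.ofBijective _ hΦ)).symm
    _ = Dc h n + Ec (h + 1) n := Nat.card_sum

lemma Ec_zero (n : ℕ) : Ec 0 n = Dc 0 n := by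
  exact Nat.card_congr (Equiv.subtypeEquivRight (fun p => by
    constructor
    · rintro ⟨h1, h2, h3⟩
      exact ⟨h1, h2, by omega⟩
    · rintro ⟨h1, h2, h3⟩
      exact ⟨h1, h2, by omega⟩))

/-! ### Counting tuples -/

lemma P_eq (n : ℕ) (L : List ℕ) : P (n : ℤ) L = Nat.card (Tset L n) := rfl

lemma P_nil (n : ℕ) : P (n : ℤ) [] = if n = 0 then 1 else 0 := by
  rw [P_eq]
  rcases Nat.eq_zero_or_pos n with h0 | hpos
  · subst h0
    rw [if_pos rfl, Nat.card_eq_one_iff_unique]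
    refine ⟨⟨fun x y => Subtype.ext (funext fun i => i.elim0)⟩, ⟨⟨fun i => i.elim0, fun i => i.elim0, by simp, fun i => i.elim0⟩⟩⟩
  · rw [if_neg (by omega), Nat.card_eq_zero]
    left
    refine ⟨fun x => ?_⟩
    have := x.2.2.1
    simp only [List.length_nil, Finset.univ_eq_empty, Finset.sum_empty] at this
    omega

lemma P_cons (a : ℕ) (L : List ℕ) (n : ℕ) :
    P (n : ℤ) (a :: L) = ∑ j ∈ Finset.range (n + 1), Ec a j * P ((n - j : ℕ) : ℤ) L := by
  have hΨ : Function.Bijective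
      (fun x : Σ j : Fin (n + 1), Eset a j × Tset L (n - j) =>
        (⟨Fin.cons x.2.1.1 x.2.2.1, by
            intro i
            refine Fin.cases ?_ (fun i => ?_) i
            · simpa using x.2.1.2.1
            · simpa using x.2.2.2.1 i, by
            show (∑ i : Fin (L.length + 1),
              ((Fin.cons (α := fun _ => List ℤ) x.2.1.1 x.2.2.1 i).length : ℤ)) = 2 * (n : ℤ)
            rw [Fin.sum_univ_succ]
            simp only [Fin.cons_zero, Fin.cons_succ]
            rw [x.2.2.2.2.1]
            have h1 := x.2.1.2.2.1
            have h3 : (x.1 : ℕ) ≤ n := by omega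
            rw [h1]
            push_cast
            omega, by
            intro i
            refine Fin.cases ?_ (fun i => ?_) i
            · simpa using x.2.1.2.2.2
            · simpa using x.2.2.2.2.2 i⟩ : Tset (a :: L) n)) := by
    constructor
    · rintro ⟨⟨j, hj⟩, ⟨q, hq⟩, ⟨t, ht⟩⟩ ⟨⟨j', hj'⟩, ⟨q', hq'⟩, ⟨t', ht'⟩⟩ hxy
      have hv : Fin.cons (α := fun _ => List ℤ) q t = Fin.cons q' t' :=
        congrArg Subtype.val hxy
      have hq0 : q = q' := by
        have := congrFun hv 0
        simpa using this
      have htail : t = t' := by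
        funext i
        have := congrFun hv i.succ
        simpa using this
      subst hq0
      subst htail
      have h1 := hq.2.1
      have h2 := hq'.2.1
      simp only [Fin.val_mk] at h1 h2
      have hjj : j = j' := by omega
      subst hjj
      rfl
    · rintro ⟨p, h1, h2, h3⟩
      have h1' : ∀ i : Fin (L.length + 1), IsDyckPath (p i) := h1
      have h2' : (∑ i : Fin (L.length + 1), ((p i).length : ℤ)) = 2 * (n : ℤ) := h2
      obtain ⟨jq, hjq⟩ := dyck_even (h1' 0)
      have hlen0 : ((p (0 : Fin (L.length + 1))).length : ℤ) = 2 * (jq : ℤ) := by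
        exact_mod_cast congrArg Nat.cast hjq
      have hle : ((p (0 : Fin (L.length + 1))).length : ℤ) ≤ 2 * (n : ℤ) := by
        rw [← h2']
        exact Finset.single_le_sum (f := fun j : Fin (L.length + 1) => ((p j).length : ℤ))
          (fun j _ => by positivity) (Finset.mem_univ 0)
      have hjqn : jq ≤ n := by omega
      have hsum : (∑ i : Fin L.length, ((p i.succ).length : ℤ)) = 2 * ((n - jq : ℕ) : ℤ) := by
        rw [Fin.sum_univ_succ] at h2'
        push_cast
        omega
      refine ⟨⟨⟨jq, by omega⟩, ⟨p (0 : Fin (L.length + 1)), h1' 0, hjq,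
          by simpa using h3 (0 : Fin (L.length + 1))⟩,
        ⟨fun i => p i.succ, fun i => h1 _, hsum, fun i => by simpa using h3 i.succ⟩⟩, ?_⟩
      exact Subtype.ext (Fin.cons_self_tail p)
  calc P (n : ℤ) (a :: L)
      = Nat.card (Σ j : Fin (n + 1), Eset a j × Tset L (n - j)) :=
        (Nat.card_congr (Equiv.ofBijective _ hΨ)).symm
    _ = ∑ j : Fin (n + 1), Nat.card (Eset a j × Tset L (n - j)) := ncard_sigma _
    _ = ∑ j : Fin (n + 1), Ec a j * P (((n - j : ℕ) : ℤ)) L := by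
        refine Finset.sum_congr rfl (fun j _ => ?_)
        rw [Nat.card_prod]
        rfl
    _ = ∑ j ∈ Finset.range (n + 1), Ec a j * P ((n - j : ℕ) : ℤ) L :=
        Fin.sum_univ_eq_sum_range (fun j => Ec a j * P ((n - j : ℕ) : ℤ) L) (n + 1)

/-! ### Power series -/

open PowerSeries in
lemma coeff_mul_eq (f g : PowerSeries ℤ) (n : ℕ) :
    coeff n (f * g) = ∑ j ∈ Finset.range (n + 1), coeff j f * coeff (n - j) g := by
  rw [coeff_mul, Finset.Nat.sum_antidiagonal_eq_sum_range_succ_mk]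

noncomputable def Cs : ℕ → PowerSeries ℤ
  | 0 => 0
  | h + 1 => PowerSeries.mk fun n => (Dc h n : ℤ)

noncomputable def Es (h : ℕ) : PowerSeries ℤ := PowerSeries.mk fun n => (Ec h n : ℤ)

noncomputable def PsL (L : List ℕ) : PowerSeries ℤ := PowerSeries.mk fun n => (P (n : ℤ) L : ℤ)

open PowerSeries in
lemma Cs_rel (k : ℕ) : Cs (k + 1) = 1 + X * Cs k * Cs (k + 1) := by
  ext n
  rw [mul_assoc, map_add, coeff_one]
  cases n with
  | zero =>
    rw [if_pos rfl, coeff_zero_X_mul, Cs, coeff_mk, Dc_zero_n]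
    simp
  | succ m =>
    rw [coeff_succ_X_mul, if_neg (Nat.succ_ne_zero m)]
    cases k with
    | zero =>
      simp only [Cs, coeff_mk, Dc_zero_h, zero_mul, map_zero]
      simp
    | succ h =>
      simp only [Cs, coeff_mk]
      rw [coeff_mul_eq, Dc_rec h m, zero_add]
      push_cast
      refine Finset.sum_congr rfl (fun j hj => by rw [coeff_mk, coeff_mk])

open PowerSeries in
lemma Es_eq (h : ℕ) : Es h = Cs (h + 1) - Cs h := by
  ext n
  rw [map_sub]
  cases h with
  | zero => simp [Es, Cs, Ec_zero]
  | succ h =>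
    simp only [Es, Cs, coeff_mk]
    have := Dc_split h n
    push_cast
    omega

lemma core_ring {R : Type*} [CommRing R] (t c0 c1 c2 c3 : R)
    (e1 : c1 = 1 + t*c0*c1) (e2 : c2 = 1 + t*c1*c2) (e3 : c3 = 1 + t*c2*c3) :
    (c2-c1) = t*((c1-c0) + 2*(c2-c1) + (c3-c2)) - t*(c2-c1)*((c1-c0)+(c2-c1)+(c3-c2)) := by
  linear_combination (t^2*c1*c2 - 1 + t) * e1 + (t*(c3-c0) + 1 - t + t*c1 - t^2*c0*c1) * e2 - (t*c1) * e3

open PowerSeries in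
lemma Es_core (h : ℕ) :
    Es (h + 1) = X * ((Es h) + 2 * (Es (h + 1)) + (Es (h + 2)))
      - X * (Es (h + 1)) * ((Es h) + (Es (h + 1)) + (Es (h + 2))) := by
  have e1 := Cs_rel h
  have e2 := Cs_rel (h + 1)
  have e3 := Cs_rel (h + 2)
  rw [Es_eq h, Es_eq (h + 1), Es_eq (h + 2)]
  have := core_ring (X : PowerSeries ℤ) (Cs h) (Cs (h + 1)) (Cs (h + 1 + 1)) (Cs (h + 2 + 1))
    e1 e2 e3
  calc Cs (h + 1 + 1) - Cs (h + 1)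
      = X * ((Cs (h + 1) - Cs h) + 2 * (Cs (h + 1 + 1) - Cs (h + 1)) + (Cs (h + 2 + 1) - Cs (h + 2)))
        - X * (Cs (h + 1 + 1) - Cs (h + 1)) *
          ((Cs (h + 1) - Cs h) + (Cs (h + 1 + 1) - Cs (h + 1)) + (Cs (h + 2 + 1) - Cs (h + 2))) := by
        have h22 : Cs (h + 1 + 1) = Cs (h + 2) := rfl
        rw [h22] at this ⊢
        linear_combination this
    _ = _ := by rfl

lemma PsL_nil : PsL [] = 1 := by
  ext n
  simp [PsL, P_nil, PowerSeries.coeff_one]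

lemma PsL_cons (a : ℕ) (L : List ℕ) : PsL (a :: L) = Es a * PsL L := by
  ext n
  rw [coeff_mul_eq]
  simp only [PsL, Es, PowerSeries.coeff_mk]
  rw [P_cons]
  push_cast
  rfl

lemma PsL_append (A B : List ℕ) : PsL (A ++ B) = PsL A * PsL B := by
  induction A with
  | nil => rw [List.nil_append, PsL_nil, one_mul]
  | cons a A ih => rw [List.cons_append, PsL_cons, ih, PsL_cons, mul_assoc]

lemma PsL_replicate (m h : ℕ) : PsL (List.replicate m h) = (Es h) ^ m := by
  induction m with
  | zero => simp [PsL_nil]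
  | succ m ih =>
    rw [List.replicate_succ, PsL_cons, ih, pow_succ]
    ring


/-! ### The `flat` lists underlying `Qx` -/

def flat (x s : ℕ) (l : List ℕ) : List ℕ :=
  (l.zipIdx s).flatMap fun q => List.replicate q.1 (x + q.2)

lemma Qx_eq (n x : ℕ) (a : List ℕ) : Qx (n : ℤ) x a = P (n : ℤ) (flat x 0 a) := rfl

lemma flat_nil (x s : ℕ) : flat x s [] = [] := rfl

lemma flat_cons (x s v : ℕ) (l : List ℕ) :
    flat x s (v :: l) = List.replicate v (x + s) ++ flat x (s + 1) l := by
  simp [flat]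

lemma flat_append (x s : ℕ) (l₁ l₂ : List ℕ) :
    flat x s (l₁ ++ l₂) = flat x s l₁ ++ flat x (s + l₁.length) l₂ := by
  induction l₁ generalizing s with
  | nil => simp [flat_nil]
  | cons v l ih =>
    simp only [List.cons_append, List.length_cons]
    rw [flat_cons, flat_cons, ih (s + 1), List.append_assoc,
      show s + 1 + l.length = s + (l.length + 1) from by omega]

lemma PsL_flat_block (x : ℕ) (l₁ l₂ : List ℕ) (b c d : ℕ) :
    PsL (flat x 0 (l₁ ++ b :: c :: d :: l₂)) =
      (PsL (flat x 0 l₁) * PsL (flat x (l₁.length + 3) l₂)) *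
        ((Es (x + l₁.length)) ^ b * (Es (x + l₁.length + 1)) ^ c
          * (Es (x + l₁.length + 2)) ^ d) := by
  rw [flat_append, flat_cons, flat_cons, flat_cons,
    PsL_append, PsL_append, PsL_append, PsL_append,
    PsL_replicate, PsL_replicate, PsL_replicate]
  rw [show 0 + l₁.length = l₁.length from by omega,
    show x + (l₁.length + 1) = x + l₁.length + 1 from by omega,
    show x + (l₁.length + 1 + 1) = x + l₁.length + 2 from by omega,
    show l₁.length + 1 + 1 + 1 = l₁.length + 3 from by omega]
  ring

open PowerSeries in
lemma perx (x : ℕ) (l₁ l₂ : List ℕ) (b c d : ℕ) (hc : 1 ≤ c) :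
    PsL (flat x 0 (l₁ ++ b :: c :: d :: l₂)) =
      X * (2 * PsL (flat x 0 (l₁ ++ b :: c :: d :: l₂))
        + PsL (flat x 0 (l₁ ++ (b + 1) :: (c - 1) :: d :: l₂))
        + PsL (flat x 0 (l₁ ++ b :: (c - 1) :: (d + 1) :: l₂))
        - PsL (flat x 0 (l₁ ++ (b + 1) :: c :: d :: l₂))
        - PsL (flat x 0 (l₁ ++ b :: (c + 1) :: d :: l₂))
        - PsL (flat x 0 (l₁ ++ b :: c :: (d + 1) :: l₂))) := by
  obtain ⟨c', rfl⟩ : ∃ c', c = c' + 1 := ⟨c - 1, by omega⟩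
  simp only [PsL_flat_block, Nat.add_sub_cancel]
  set W := PsL (flat x 0 l₁) * PsL (flat x (l₁.length + 3) l₂) with hW
  set h0 := x + l₁.length with hh0
  have key := Es_core h0
  linear_combination (W * Es h0 ^ b * Es (h0 + 1) ^ c' * Es (h0 + 2) ^ d) * key

/-! ### Vanishing of the top term -/

lemma P_eq_zero_of_mem_gt {L : List ℕ} {n y : ℕ} (hy : y ∈ L) (hgt : n < y) :
    P (n : ℤ) L = 0 := by
  rw [P_eq, Nat.card_eq_zero]
  left
  refine ⟨fun xx => ?_⟩
  obtain ⟨i, hi⟩ := List.mem_iff_get.mp hy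
  have hh := xx.2.2.2 i
  have hl := two_mul_height_le (xx.2.1 i)
  have hle : ((xx.1 i).length : ℤ) ≤ 2 * (n : ℤ) := by
    have h2 := Finset.single_le_sum (f := fun j => ((xx.1 j).length : ℤ))
      (fun j _ => by positivity) (Finset.mem_univ i)
    rw [xx.2.2.1] at h2
    exact h2
  rw [hi] at hh
  rw [hh] at hl
  omega

lemma mem_flat_center (x : ℕ) (l₁ l₂ : List ℕ) (b c d : ℕ) (hc : 1 ≤ c) :
    (x + l₁.length + 1) ∈ flat x 0 (l₁ ++ b :: c :: d :: l₂) := by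
  rw [flat_append, flat_cons, flat_cons]
  apply List.mem_append_right
  apply List.mem_append_right
  apply List.mem_append_left
  rw [List.mem_replicate]
  exact ⟨by omega, by omega⟩

lemma Qx_top (n : ℕ) (l₁ l₂ : List ℕ) (b c d : ℕ) (hc : 1 ≤ c) :
    Qx (n : ℤ) n (l₁ ++ b :: c :: d :: l₂) = 0 := by
  rw [Qx_eq]
  exact P_eq_zero_of_mem_gt (mem_flat_center n l₁ l₂ b c d hc) (by omega)

/-! ### Coefficient extraction -/

open PowerSeries in
lemma coeff_PsL (L : List ℕ) (n : ℕ) : coeff n (PsL L) = (P (n : ℤ) L : ℤ) := coeff_mk n _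

open PowerSeries in
lemma perx_coeff (m x : ℕ) (l₁ l₂ : List ℕ) (b c d : ℕ) (hc : 1 ≤ c) :
    (Qx ((m + 1 : ℕ) : ℤ) x (l₁ ++ b :: c :: d :: l₂) : ℤ) =
      2 * Qx ((m : ℕ) : ℤ) x (l₁ ++ b :: c :: d :: l₂)
        + Qx ((m : ℕ) : ℤ) x (l₁ ++ (b + 1) :: (c - 1) :: d :: l₂)
        + Qx ((m : ℕ) : ℤ) x (l₁ ++ b :: (c - 1) :: (d + 1) :: l₂)
        - Qx ((m : ℕ) : ℤ) x (l₁ ++ (b + 1) :: c :: d :: l₂)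
        - Qx ((m : ℕ) : ℤ) x (l₁ ++ b :: (c + 1) :: d :: l₂)
        - Qx ((m : ℕ) : ℤ) x (l₁ ++ b :: c :: (d + 1) :: l₂) := by
  have hper := perx x l₁ l₂ b c d hc
  have hco := congrArg (coeff (m + 1)) hper
  rw [coeff_succ_X_mul] at hco
  rw [two_mul] at hco
  simp only [map_add, map_sub, coeff_PsL] at hco
  simp only [Qx_eq]
  rw [hco]
  push_cast
  ring

lemma Q_sum (m : ℕ) (L' : List ℕ) :
    Q ((m : ℕ) : ℤ) L' = ∑ x ∈ Finset.range (m + 1), Qx ((m : ℕ) : ℤ) x L' := by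
  simp [Q, Int.toNat_natCast]

end DyckAux

open DyckAux in
/-- For `n ≥ 1` and a tuple `(a₀,…,a_k)` written as `l₁ ++ [b, c, d] ++ l₂`,
where `b = a_{i-1}`, `c = aᵢ ≥ 1`, `d = a_{i+1}` for an index `i` with `1 ≤ i ≤ k`
(the case `i = k` corresponds to `d = 0` and `l₂ = []`, i.e. extending the tuple by
`a_{k+1} = 0`, which does not change the value of `Q`):
`Q_n(a₀,…) = 2·Q_{n-1}(a₀,…) + Q_{n-1}(…, a_{i-1}+1, aᵢ−1, …)
  + Q_{n-1}(…, aᵢ−1, a_{i+1}+1, …) − Q_{n-1}(…, a_{i-1}+1, aᵢ, …)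
  − Q_{n-1}(…, aᵢ+1, …) − Q_{n-1}(…, aᵢ, a_{i+1}+1, …)`. -/
theorem grouped_shorten (n : ℕ) (hn : 1 ≤ n)
    (l₁ l₂ : List ℕ) (b c d : ℕ) (hc : 1 ≤ c) :
    (Q (n : ℤ) (l₁ ++ b :: c :: d :: l₂) : ℤ) =
      2 * Q ((n : ℤ) - 1) (l₁ ++ b :: c :: d :: l₂)
        + Q ((n : ℤ) - 1) (l₁ ++ (b + 1) :: (c - 1) :: d :: l₂)
        + Q ((n : ℤ) - 1) (l₁ ++ b :: (c - 1) :: (d + 1) :: l₂)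
        - Q ((n : ℤ) - 1) (l₁ ++ (b + 1) :: c :: d :: l₂)
        - Q ((n : ℤ) - 1) (l₁ ++ b :: (c + 1) :: d :: l₂)
        - Q ((n : ℤ) - 1) (l₁ ++ b :: c :: (d + 1) :: l₂) := by
  obtain ⟨m, rfl⟩ : ∃ m, n = m + 1 := ⟨n - 1, by omega⟩
  have hcast : ((m + 1 : ℕ) : ℤ) - 1 = ((m : ℕ) : ℤ) := by push_cast; ring
  rw [hcast]
  rw [Q_sum (m + 1), Finset.sum_range_succ, Qx_top (m + 1) l₁ l₂ b c d hc, add_zero]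
  rw [Q_sum m, Q_sum m, Q_sum m, Q_sum m, Q_sum m, Q_sum m]
  push_cast
  rw [Finset.mul_sum, ← Finset.sum_add_distrib, ← Finset.sum_add_distrib,
    ← Finset.sum_sub_distrib, ← Finset.sum_sub_distrib, ← Finset.sum_sub_distrib]
  exact Finset.sum_congr rfl (fun x _ => perx_coeff m x l₁ l₂ b c d hc)
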